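/- Let a, b, c, d, λ, μ be positive real numbers and suppose 0 < ε < min{λ/(2a), (2dλ − bμ)/(bc + ad)}. Then there exists w* > 0 such that P′_{λ,ε}(w) < 0 for all w ∈ [0, w*), P′_{λ,ε}(w*) = 0, and P′_{λ,ε}(w) > 0 for all w > w*; in particular P_{λ,ε} is strictly decreasing on [0, w*] and strictly increasing on [w*, +∞). -/

import Mathlib

/-- The cubic polynomial `P_{λ,ε}(w)` arising from the constant-coefficient
Holling–Tanner steady-state system. -/
noncomputable def cubicP (a b c d μ ε lam w : ℝ) : ℝ :=
  w ^ 3 + (2 - lam / (ε * a)) * w ^ 2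
    + (1 + b * c / (a * d) + (b * μ - 2 * d * lam) / (ε * a * d)) * w
    + (b * μ - d * lam) / (ε * a * d)

lemma cubicP_hasDerivAt (a b c d μ ε lam w : ℝ) :
    HasDerivAt (cubicP a b c d μ ε lam)
      (3 * w ^ 2 + 2 * (2 - lam / (ε * a)) * w
        + (1 + b * c / (a * d) + (b * μ - 2 * d * lam) / (ε * a * d))) w := by
  have h := (((hasDerivAt_pow 3 w).add
      ((hasDerivAt_pow 2 w).const_mul (2 - lam / (ε * a)))).add
      ((hasDerivAt_id w).const_mul
        (1 + b * c / (a * d) + (b * μ - 2 * d * lam) / (ε * a * d)))).add_const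
      ((b * μ - d * lam) / (ε * a * d))
  refine h.congr_deriv ?_
  push_cast
  ring

lemma deriv_cubicP (a b c d μ ε lam w : ℝ) :
    deriv (cubicP a b c d μ ε lam) w
      = 3 * w ^ 2 + 2 * (2 - lam / (ε * a)) * w
        + (1 + b * c / (a * d) + (b * μ - 2 * d * lam) / (ε * a * d)) :=
  (cubicP_hasDerivAt a b c d μ ε lam w).deriv

theorem stmt3 (a b c d ε lam μ : ℝ)
    (ha : 0 < a) (hb : 0 < b) (hc : 0 < c) (hd : 0 < d)
    (hlam : 0 < lam) (hμ : 0 < μ) (hε : 0 < ε)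
    (hε₁ : ε < lam / (2 * a)) (hε₂ : ε < (2 * d * lam - b * μ) / (b * c + a * d)) :
    ∃ ws : ℝ, 0 < ws ∧
      (∀ w : ℝ, 0 ≤ w → w < ws → deriv (cubicP a b c d μ ε lam) w < 0) ∧
      deriv (cubicP a b c d μ ε lam) ws = 0 ∧
      (∀ w : ℝ, ws < w → 0 < deriv (cubicP a b c d μ ε lam) w) ∧
      StrictAntiOn (cubicP a b c d μ ε lam) (Set.Icc 0 ws) ∧
      StrictMonoOn (cubicP a b c d μ ε lam) (Set.Ici ws) := by
  obtain ⟨A, hAdef⟩ : ∃ A : ℝ, A = 2 - lam / (ε * a) := ⟨_, rfl⟩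
  obtain ⟨B, hBdef⟩ : ∃ B : ℝ,
      B = 1 + b * c / (a * d) + (b * μ - 2 * d * lam) / (ε * a * d) := ⟨_, rfl⟩
  have hεa : (0:ℝ) < ε * a := by positivity
  have hεad : (0:ℝ) < ε * a * d := by positivity
  have hA : A < 0 := by
    rw [hAdef, sub_neg, lt_div_iff₀ hεa]
    have := (lt_div_iff₀ (by positivity : (0:ℝ) < 2 * a)).mp hε₁
    nlinarith
  have hB : B < 0 := by
    have h2 := (lt_div_iff₀ (by positivity : (0:ℝ) < b * c + a * d)).mp hε₂
    rw [hBdef, show (1:ℝ) + b * c / (a * d) + (b * μ - 2 * d * lam) / (ε * a * d)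
        = (ε * a * d + ε * b * c + (b * μ - 2 * d * lam)) / (ε * a * d) by
      field_simp]
    apply div_neg_of_neg_of_pos _ hεad
    nlinarith
  have hDpos : (0:ℝ) < A ^ 2 - 3 * B := by nlinarith [sq_nonneg A]
  obtain ⟨s, hsdef⟩ : ∃ s : ℝ, s = Real.sqrt (A ^ 2 - 3 * B) := ⟨_, rfl⟩
  have hs0 : 0 < s := hsdef ▸ Real.sqrt_pos.mpr hDpos
  have hs : s ^ 2 = A ^ 2 - 3 * B := hsdef ▸ Real.sq_sqrt hDpos.le
  have hAs : -s < A := by nlinarith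
  have hws0 : 0 < (-A + s) / 3 := by linarith
  have hcont : Continuous (cubicP a b c d μ ε lam) := by
    unfold cubicP; fun_prop
  have hdpos : ∀ w : ℝ, (-A + s) / 3 < w → 0 < deriv (cubicP a b c d μ ε lam) w := by
    intro w hw
    rw [deriv_cubicP, ← hAdef, ← hBdef]
    have h1 : s < 3 * w + A := by linarith
    nlinarith [mul_pos (show (0:ℝ) < 3 * w + A - s by linarith)
      (show (0:ℝ) < 3 * w + A + s by linarith)]
  have hdneg : ∀ w : ℝ, 0 ≤ w → w < (-A + s) / 3 →
      deriv (cubicP a b c d μ ε lam) w < 0 := by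
    intro w hw0 hw
    rw [deriv_cubicP, ← hAdef, ← hBdef]
    have h1 : 3 * w + A < s := by linarith
    have h2 : -s < 3 * w + A := by linarith
    nlinarith [mul_pos (show (0:ℝ) < s - (3 * w + A) by linarith)
      (show (0:ℝ) < 3 * w + A + s by linarith)]
  have hdz : deriv (cubicP a b c d μ ε lam) ((-A + s) / 3) = 0 := by
    rw [deriv_cubicP, ← hAdef, ← hBdef]
    linear_combination hs / 3
  refine ⟨(-A + s) / 3, hws0, hdneg, hdz, hdpos, ?_, ?_⟩
  · apply strictAntiOn_of_deriv_neg (convex_Icc 0 _) hcont.continuousOn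
    intro w hw
    rw [interior_Icc] at hw
    exact hdneg w hw.1.le hw.2
  · apply strictMonoOn_of_deriv_pos (convex_Ici _) hcont.continuousOn
    intro w hw
    rw [interior_Ici] at hw
    exact hdpos w hw
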